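/- Let G' be a weighted graph with non-negative edge weights and let C' be a set of vertices of G' such that every two distinct vertices of C' are at distance greater than D in G'. Then for every graph G'' obtained from G' by adding a single new edge (u,v) with non-negative weight, there exists a subset C'' of C' with |C''| = |C'| - 1 such that every two distinct vertices of C'' are at distance greater than D in G''. -/

import Mathlib

open scoped ENNReal

/-- The weight of a walk: the sum of the weights of its (directed) edges. -/
noncomputable def walkWeight {V : Type*} {G : SimpleGraph V} (w : V → V → ℝ≥0∞) {u v : V}
    (p : G.Walk u v) : ℝ≥0∞ :=
  (p.darts.map fun d => w d.toProd.1 d.toProd.2).sum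

/-- Weighted shortest-path distance (∞ if there is no connecting walk). -/
noncomputable def wdist {V : Type*} (G : SimpleGraph V) (w : V → V → ℝ≥0∞) (u v : V) : ℝ≥0∞ :=
  ⨅ p : G.Walk u v, walkWeight w p


section Aux

variable {V : Type*} {G : SimpleGraph V} (w : V → V → ℝ≥0∞)

lemma wdist_le {x y : V} (p : G.Walk x y) : wdist G w x y ≤ walkWeight w p :=
  iInf_le _ p

@[simp] lemma walkWeight_nil {x : V} : walkWeight w (SimpleGraph.Walk.nil : G.Walk x x) = 0 := by
  simp [walkWeight]

@[simp] lemma walkWeight_cons {x y z : V} (h : G.Adj x y) (p : G.Walk y z) :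
    walkWeight w (SimpleGraph.Walk.cons h p) = w x y + walkWeight w p := by
  simp [walkWeight]

lemma wdist_self (x : V) : wdist G w x x = 0 :=
  le_antisymm (by simpa using wdist_le w (SimpleGraph.Walk.nil : G.Walk x x)) zero_le

lemma walkWeight_append {x y z : V} (p : G.Walk x y) (q : G.Walk y z) :
    walkWeight w (p.append q) = walkWeight w p + walkWeight w q := by
  simp [walkWeight]

lemma wdist_triangle (x y z : V) :
    wdist G w x z ≤ wdist G w x y + wdist G w y z := by
  rw [wdist, wdist, ENNReal.iInf_add]
  refine le_iInf fun p => ?_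
  rw [wdist, ENNReal.add_iInf]
  refine le_iInf fun q => ?_
  exact (wdist_le w (p.append q)).trans_eq (walkWeight_append w p q)

lemma walkWeight_reverse (hw : ∀ x y, w x y = w y x) {x y : V} (p : G.Walk x y) :
    walkWeight w p.reverse = walkWeight w p := by
  have key : ∀ d : G.Dart, w d.toProd.2 d.toProd.1 = w d.toProd.1 d.toProd.2 :=
    fun d => hw _ _
  have hfun : ((fun d => w d.toProd.1 d.toProd.2) ∘ SimpleGraph.Dart.symm) =
      fun d : G.Dart => w d.toProd.1 d.toProd.2 := by
    funext d
    simp [SimpleGraph.Dart.symm, hw d.toProd.2 d.toProd.1]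
  simp [walkWeight, SimpleGraph.Walk.darts_reverse, List.sum_reverse, hfun]

lemma wdist_symm (hw : ∀ x y, w x y = w y x) (x y : V) :
    wdist G w x y = wdist G w y x := by
  have h : ∀ a b : V, wdist G w a b ≤ wdist G w b a := by
    intro a b
    refine le_iInf fun p => ?_
    exact (wdist_le w p.reverse).trans_eq (walkWeight_reverse w hw p)
  exact le_antisymm (h x y) (h y x)

lemma wdist_le_of_adj {x y : V} (h : G.Adj x y) : wdist G w x y ≤ w x y := by
  simpa using wdist_le w (SimpleGraph.Walk.cons h SimpleGraph.Walk.nil)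

section Steps
variable {V : Type*} (G' : SimpleGraph V) (w : V → V → ℝ≥0∞)

lemma step_uv (u v c : V) :
    min (wdist G' w u c) (min (wdist G' w u u + w u v + wdist G' w v c)
      (wdist G' w u v + w u v + wdist G' w u c)) ≤
    w u v + min (wdist G' w v c) (min (wdist G' w v u + w u v + wdist G' w v c)
      (wdist G' w v v + w u v + wdist G' w u c)) := by
  rcases min_choice (wdist G' w v c) (min (wdist G' w v u + w u v + wdist G' w v c)
      (wdist G' w v v + w u v + wdist G' w u c)) with hm | hm <;> rw [hm]
  · refine ((min_le_right _ _).trans (min_le_left _ _)).trans ?_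
    simp [wdist_self]
  · rcases min_choice (wdist G' w v u + w u v + wdist G' w v c)
        (wdist G' w v v + w u v + wdist G' w u c) with hm2 | hm2 <;> rw [hm2]
    · refine ((min_le_right _ _).trans (min_le_left _ _)).trans ?_
      simp only [wdist_self, zero_add]
      exact add_le_add le_rfl le_add_self
    · refine (min_le_left _ _).trans ?_
      simp only [wdist_self, zero_add]
      exact le_add_self.trans le_add_self

lemma step_vu (u v c : V) :
    min (wdist G' w v c) (min (wdist G' w v u + w u v + wdist G' w v c)
      (wdist G' w v v + w u v + wdist G' w u c)) ≤
    w u v + min (wdist G' w u c) (min (wdist G' w u u + w u v + wdist G' w v c)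
      (wdist G' w u v + w u v + wdist G' w u c)) := by
  rcases min_choice (wdist G' w u c) (min (wdist G' w u u + w u v + wdist G' w v c)
      (wdist G' w u v + w u v + wdist G' w u c)) with hm | hm <;> rw [hm]
  · refine ((min_le_right _ _).trans (min_le_right _ _)).trans ?_
    simp only [wdist_self, zero_add]
    exact le_rfl
  · rcases min_choice (wdist G' w u u + w u v + wdist G' w v c)
        (wdist G' w u v + w u v + wdist G' w u c) with hm2 | hm2 <;> rw [hm2]
    · refine (min_le_left _ _).trans ?_
      simp only [wdist_self, zero_add]
      exact le_add_self.trans le_add_self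
    · refine ((min_le_right _ _).trans (min_le_right _ _)).trans ?_
      simp only [wdist_self, zero_add]
      exact add_le_add le_rfl le_add_self

end Steps

lemma key_walk {V : Type*} (G' : SimpleGraph V) (w : V → V → ℝ≥0∞)
    (hw : ∀ x y, w x y = w y x) (u v : V) :
    ∀ {x y : V} (p : (G' ⊔ SimpleGraph.fromEdgeSet {s(u, v)}).Walk x y),
      min (wdist G' w x y) (min (wdist G' w x u + w u v + wdist G' w v y)
        (wdist G' w x v + w u v + wdist G' w u y)) ≤ walkWeight w p := by
  intro x y p
  induction p with
  | nil =>
    refine (min_le_left _ _).trans ?_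
    simp [wdist_self]
  | @cons a b c h q ih =>
    rw [walkWeight_cons]
    -- strategy: show min3 a c ≤ w a b + min3 b c, then combine with ih
    have step : min (wdist G' w a c) (min (wdist G' w a u + w u v + wdist G' w v c)
        (wdist G' w a v + w u v + wdist G' w u c)) ≤
        w a b + min (wdist G' w b c) (min (wdist G' w b u + w u v + wdist G' w v c)
        (wdist G' w b v + w u v + wdist G' w u c)) := by
      rcases (SimpleGraph.sup_adj _ _ _ _).mp h with hG | hE
      · -- edge of G'
        have hab : wdist G' w a b ≤ w a b := wdist_le_of_adj w hG
        rcases min_choice (wdist G' w b c) (min (wdist G' w b u + w u v + wdist G' w v c)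
            (wdist G' w b v + w u v + wdist G' w u c)) with hm | hm <;> rw [hm]
        · refine (min_le_left _ _).trans ?_
          calc wdist G' w a c ≤ wdist G' w a b + wdist G' w b c := wdist_triangle w a b c
            _ ≤ w a b + wdist G' w b c := by gcongr
        · rcases min_choice (wdist G' w b u + w u v + wdist G' w v c)
              (wdist G' w b v + w u v + wdist G' w u c) with hm2 | hm2 <;> rw [hm2]
          · refine ((min_le_right _ _).trans (min_le_left _ _)).trans ?_
            calc wdist G' w a u + w u v + wdist G' w v c
                ≤ (wdist G' w a b + wdist G' w b u) + w u v + wdist G' w v c := by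
                  gcongr; exact wdist_triangle w a b u
              _ ≤ w a b + (wdist G' w b u + w u v + wdist G' w v c) := by
                  rw [add_assoc, add_assoc, add_assoc]; gcongr
          · refine ((min_le_right _ _).trans (min_le_right _ _)).trans ?_
            calc wdist G' w a v + w u v + wdist G' w u c
                ≤ (wdist G' w a b + wdist G' w b v) + w u v + wdist G' w u c := by
                  gcongr; exact wdist_triangle w a b v
              _ ≤ w a b + (wdist G' w b v + w u v + wdist G' w u c) := by
                  rw [add_assoc, add_assoc, add_assoc]; gcongr
      · -- the new edge
        rw [SimpleGraph.fromEdgeSet_adj, Set.mem_singleton_iff, Sym2.eq_iff] at hE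
        rcases hE.1 with ⟨ha, hb⟩ | ⟨ha, hb⟩ <;> subst ha <;> subst hb
        · exact step_uv G' w a b c
        · rw [hw a b]
          exact step_vu G' w b a c
    calc _ ≤ w a b + min (wdist G' w b c) (min (wdist G' w b u + w u v + wdist G' w v c)
        (wdist G' w b v + w u v + wdist G' w u c)) := step
      _ ≤ w a b + walkWeight w q := by gcongr


end Aux

/-- If all pairwise distances within `C'` exceed `D` in `G'`, then after adding a single
new edge `{u,v}` there is a subset `C''` of `C'` of size `|C'| - 1` whose pairwise
distances still exceed `D`. -/
theorem stmt0 {V : Type*} (G' : SimpleGraph V) (w : V → V → ℝ≥0∞)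
    (hw : ∀ x y, w x y = w y x) (D : ℝ≥0∞) (C' : Finset V)
    (hC : ∀ x ∈ C', ∀ y ∈ C', x ≠ y → D < wdist G' w x y)
    (u v : V) (huv : u ≠ v) (hne : ¬ G'.Adj u v) :
    ∃ C'' ⊆ C', C''.card = C'.card - 1 ∧
      ∀ x ∈ C'', ∀ y ∈ C'', x ≠ y →
        D < wdist (G' ⊔ SimpleGraph.fromEdgeSet {s(u, v)}) w x y := by
  classical
  rcases C'.eq_empty_or_nonempty with rfl | hCne
  · exact ⟨∅, by simp⟩
  obtain ⟨x0, hx0C, hx0min⟩ :=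
    C'.exists_min_image (fun x => min (wdist G' w x u) (wdist G' w x v)) hCne
  refine ⟨C'.erase x0, Finset.erase_subset _ _, Finset.card_erase_of_mem hx0C, ?_⟩
  intro x hx y hy hxy
  by_contra hle
  push_neg at hle
  have hx' : x ∈ C' := Finset.mem_of_mem_erase hx
  have hy' : y ∈ C' := Finset.mem_of_mem_erase hy
  have hxx0 : x ≠ x0 := Finset.ne_of_mem_erase hx
  have hyx0 : y ≠ x0 := Finset.ne_of_mem_erase hy
  have hmin : min (wdist G' w x y) (min (wdist G' w x u + w u v + wdist G' w v y)
      (wdist G' w x v + w u v + wdist G' w u y)) ≤ D := by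
    refine le_trans ?_ hle
    exact le_iInf fun p => key_walk G' w hw u v p
  rcases min_le_iff.mp hmin with h1 | h2
  · exact absurd h1 (not_le.mpr (hC x hx' y hy' hxy))
  have hfx : min (wdist G' w x u) (wdist G' w x v) ≤ min (wdist G' w y u) (wdist G' w y v)
      ∨ True := Or.inr trivial
  rcases min_le_iff.mp h2 with hB | hB
  · -- wdist x u + w u v + wdist v y ≤ D
    have hB' : wdist G' w x u + wdist G' w v y ≤ D := by
      refine le_trans ?_ hB
      exact add_le_add le_self_add le_rfl
    rcases le_total (wdist G' w x0 u) (wdist G' w x0 v) with h0 | h0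
    · -- wdist x0 u ≤ wdist y v = wdist v y ; contradiction with pair (x0, x)
      have h1 : wdist G' w x0 u ≤ wdist G' w v y := by
        calc wdist G' w x0 u = min (wdist G' w x0 u) (wdist G' w x0 v) := (min_eq_left h0).symm
          _ ≤ min (wdist G' w y u) (wdist G' w y v) := hx0min y hy'
          _ ≤ wdist G' w y v := min_le_right _ _
          _ = wdist G' w v y := wdist_symm w hw y v
      have : wdist G' w x0 x ≤ D := by
        calc wdist G' w x0 x ≤ wdist G' w x0 u + wdist G' w u x := wdist_triangle w x0 u x
          _ = wdist G' w x0 u + wdist G' w x u := by rw [wdist_symm w hw u x]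
          _ ≤ wdist G' w v y + wdist G' w x u := by gcongr
          _ = wdist G' w x u + wdist G' w v y := add_comm _ _
          _ ≤ D := hB'
      exact absurd this (not_le.mpr (hC x0 hx0C x hx' (Ne.symm hxx0)))
    · -- wdist x0 v ≤ wdist x u ; contradiction with pair (x0, y)
      have h1 : wdist G' w x0 v ≤ wdist G' w x u := by
        calc wdist G' w x0 v = min (wdist G' w x0 u) (wdist G' w x0 v) := (min_eq_right h0).symm
          _ ≤ min (wdist G' w x u) (wdist G' w x v) := hx0min x hx'
          _ ≤ wdist G' w x u := min_le_left _ _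
      have : wdist G' w x0 y ≤ D := by
        calc wdist G' w x0 y ≤ wdist G' w x0 v + wdist G' w v y := wdist_triangle w x0 v y
          _ ≤ wdist G' w x u + wdist G' w v y := by gcongr
          _ ≤ D := hB'
      exact absurd this (not_le.mpr (hC x0 hx0C y hy' (Ne.symm hyx0)))
  · -- wdist x v + w u v + wdist u y ≤ D
    have hB' : wdist G' w x v + wdist G' w u y ≤ D := by
      refine le_trans ?_ hB
      exact add_le_add le_self_add le_rfl
    rcases le_total (wdist G' w x0 u) (wdist G' w x0 v) with h0 | h0
    · -- wdist x0 u ≤ wdist x v ; contradiction with pair (x0, y)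
      have h1 : wdist G' w x0 u ≤ wdist G' w x v := by
        calc wdist G' w x0 u = min (wdist G' w x0 u) (wdist G' w x0 v) := (min_eq_left h0).symm
          _ ≤ min (wdist G' w x u) (wdist G' w x v) := hx0min x hx'
          _ ≤ wdist G' w x v := min_le_right _ _
      have : wdist G' w x0 y ≤ D := by
        calc wdist G' w x0 y ≤ wdist G' w x0 u + wdist G' w u y := wdist_triangle w x0 u y
          _ ≤ wdist G' w x v + wdist G' w u y := by gcongr
          _ ≤ D := hB'
      exact absurd this (not_le.mpr (hC x0 hx0C y hy' (Ne.symm hyx0)))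
    · -- wdist x0 v ≤ wdist y u = wdist u y ; contradiction with pair (x0, x)
      have h1 : wdist G' w x0 v ≤ wdist G' w u y := by
        calc wdist G' w x0 v = min (wdist G' w x0 u) (wdist G' w x0 v) := (min_eq_right h0).symm
          _ ≤ min (wdist G' w y u) (wdist G' w y v) := hx0min y hy'
          _ ≤ wdist G' w y u := min_le_left _ _
          _ = wdist G' w u y := wdist_symm w hw y u
      have : wdist G' w x0 x ≤ D := by
        calc wdist G' w x0 x ≤ wdist G' w x0 v + wdist G' w v x := wdist_triangle w x0 v x
          _ = wdist G' w x0 v + wdist G' w x v := by rw [wdist_symm w hw v x]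
          _ ≤ wdist G' w u y + wdist G' w x v := by gcongr
          _ = wdist G' w x v + wdist G' w u y := add_comm _ _
          _ ≤ D := hB'
      exact absurd this (not_le.mpr (hC x0 hx0C x hx' (Ne.symm hxx0)))
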